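/- int_Reg(Hitting Set) is decidable: there is an algorithm (a computable function on finite encodings of NFAs) that, given an arbitrary NFA M over the alphabet Σ = {▷, 1, a, #, $}, decides whether there exists a word w ∈ L(M) ∩ Enc such that decode_hyp(w) = (H, k) where the hypergraph H = (V, E) admits a hitting set of size at most k, i.e., a set V' ⊆ V with |V'| ≤ k containing at least one element from each hyperedge in E. -/

import Mathlib

/-- The fixed five-letter alphabet Σ = {▷, 1, a, #, $}. -/
inductive Letter : Type
  | tri    -- ▷
  | one    -- 1
  | lett   -- a
  | hash   -- #
  | dollar -- $
deriving DecidableEq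

/-- Words over the alphabet Σ. -/
abbrev Word := List Letter

/-- The threshold token `▷1^k$`. -/
def thresholdTok (k : ℕ) : Word := Letter.tri :: (List.replicate k Letter.one ++ [Letter.dollar])

/-- The left vertex token `▷a^p#`. -/
def leftTok (p : ℕ) : Word := Letter.tri :: (List.replicate p Letter.lett ++ [Letter.hash])

/-- The right vertex token `▷a^q$`. -/
def rightTok (q : ℕ) : Word := Letter.tri :: (List.replicate q Letter.lett ++ [Letter.dollar])

/-- The encoding `▷1^k$ ∏_i (▷a^{p_i}# ▷a^{q_i}$)` of a threshold `k` together with a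
list of (encoded) edges. -/
def encode (k : ℕ) (es : List (ℕ × ℕ)) : Word :=
  thresholdTok k ++ (es.map (fun e => leftTok e.1 ++ rightTok e.2)).flatten

/-- The regular language `Enc = ▷1*$(▷a*#▷a*$)*` of all encodings. -/
def Enc : Set Word := { w | ∃ (k : ℕ) (es : List (ℕ × ℕ)), w = encode k es }

/-- A token: a threshold token, a left vertex token, or a right vertex token. -/
def IsToken (w : Word) : Prop :=
  (∃ k, w = thresholdTok k) ∨ (∃ p, w = leftTok p) ∨ (∃ q, w = rightTok q)

/-- A representative function is token-preserving if all representatives are tokens. -/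
def TokenPreserving {Q : Type} (rep : Q → Q → Set Word) : Prop :=
  ∀ p q : Q, ∀ w ∈ rep p q, IsToken w

def letterEquiv : Letter ≃ Fin 5 where
  toFun s :=
    match s with
    | Letter.tri => 0
    | Letter.one => 1
    | Letter.lett => 2
    | Letter.hash => 3
    | Letter.dollar => 4
  invFun n :=
    if n = 0 then Letter.tri
    else if n = 1 then Letter.one
    else if n = 2 then Letter.lett
    else if n = 3 then Letter.hash
    else Letter.dollar
  left_inv s := by cases s <;> rfl
  right_inv n := by fin_cases n <;> rfl

instance : Primcodable Letter := Primcodable.ofEquiv (Fin 5) letterEquiv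

/-- A finite encoding of an NFA over `Letter` with states named by natural numbers:
a list of transition triples, an initial state, and a list of final states. -/
abbrev NFAEnc : Type := List (ℕ × Letter × ℕ) × ℕ × List ℕ

/-- One transition step of an encoded NFA on a set of states. -/
def encStep (T : List (ℕ × Letter × ℕ)) (S : Set ℕ) (x : Letter) : Set ℕ :=
  { q' | ∃ q ∈ S, (q, x, q') ∈ T }

/-- The language accepted by an encoded NFA. -/
def encLang (M : NFAEnc) : Set Word :=
  { w | ∃ qf ∈ M.2.2, qf ∈ w.foldl (encStep M.1) {M.2.1} }

/-- A hypergraph: a finite vertex set and a finite set of hyperedges. -/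
structure FinHypergraph where
  V : Finset ℕ
  E : Finset (Finset ℕ)

/-- `H` has a hitting set of size at most `k`. -/
def HasHittingSet (H : FinHypergraph) (k : ℕ) : Prop :=
  ∃ S : Finset ℕ, S ⊆ H.V ∧ S.card ≤ k ∧ ∀ e ∈ H.E, ∃ v ∈ S, v ∈ e

/-- The hypergraph described by a list of (encoded) incidences: the vertices are the
first components; for every value `q` occurring as a second component there is a
hyperedge collecting all first components paired with `q`. -/
def hypOf (es : List (ℕ × ℕ)) : FinHypergraph where
  V := (es.map Prod.fst).toFinset
  E := (es.map Prod.snd).toFinset.image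
        (fun q => ((es.filter (fun p => p.2 = q)).map Prod.fst).toFinset)

/-- `decode_hyp(w) = (H, k)`. -/
def decodesToHyp (w : Word) (H : FinHypergraph) (k : ℕ) : Prop :=
  ∃ es : List (ℕ × ℕ), w = encode k es ∧ H = hypOf es

namespace HS

abbrev Trans := List (ℕ × Letter × ℕ)

/-- one-letter transition relation -/
def Rel (T : Trans) (x : Letter) (s t : ℕ) : Prop := (s, x, t) ∈ T

/-- q-th power of the one-letter relation -/
def Pow (T : Trans) (x : Letter) : ℕ → ℕ → ℕ → Prop
  | 0, s, t => t = s
  | (q+1), s, t => ∃ u, Pow T x q s u ∧ Rel T x u t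

/-- single-source reachability along a word -/
def Reach (T : Trans) (s : ℕ) (w : Word) (t : ℕ) : Prop :=
  t ∈ w.foldl (encStep T) {s}

lemma mem_encStep {T : Trans} {S : Set ℕ} {x : Letter} {t : ℕ} :
    t ∈ encStep T S x ↔ ∃ s ∈ S, Rel T x s t := Iff.rfl

lemma mem_foldl_iff (T : Trans) (w : Word) :
    ∀ (S : Set ℕ) (t : ℕ), t ∈ w.foldl (encStep T) S ↔ ∃ s ∈ S, Reach T s w t := by
  induction w with
  | nil =>
    intro S t
    simp [Reach, List.foldl_nil]
  | cons x w ih =>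
    intro S t
    rw [List.foldl_cons, ih]
    constructor
    · rintro ⟨u, hu, hr⟩
      rcases (mem_encStep).1 hu with ⟨s, hs, hrel⟩
      refine ⟨s, hs, ?_⟩
      rw [Reach, List.foldl_cons, ih]
      refine ⟨u, ?_, hr⟩
      exact ⟨s, rfl, hrel⟩
    · rintro ⟨s, hs, hr⟩
      rw [Reach, List.foldl_cons, ih] at hr
      rcases hr with ⟨u, hu, hr⟩
      rcases (mem_encStep).1 hu with ⟨s', hs', hrel⟩
      cases hs'
      exact ⟨u, ⟨s, hs, hrel⟩, hr⟩

lemma reach_nil {T : Trans} {s t : ℕ} : Reach T s [] t ↔ t = s := by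
  simp [Reach]

lemma reach_append {T : Trans} {s t : ℕ} {u v : Word} :
    Reach T s (u ++ v) t ↔ ∃ m, Reach T s u m ∧ Reach T m v t := by
  rw [Reach, List.foldl_append, mem_foldl_iff]
  constructor
  · rintro ⟨m, hm, hr⟩; exact ⟨m, hm, hr⟩
  · rintro ⟨m, hm, hr⟩; exact ⟨m, hm, hr⟩

lemma reach_single {T : Trans} {s t : ℕ} {x : Letter} :
    Reach T s [x] t ↔ Rel T x s t := by
  rw [Reach]
  simp only [List.foldl_cons, List.foldl_nil]
  constructor
  · rintro ⟨s', hs', hrel⟩; cases hs'; exact hrel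
  · intro h; exact ⟨s, rfl, h⟩

lemma reach_cons {T : Trans} {s t : ℕ} {x : Letter} {w : Word} :
    Reach T s (x :: w) t ↔ ∃ m, Rel T x s m ∧ Reach T m w t := by
  have : (x :: w) = [x] ++ w := rfl
  rw [this, reach_append]
  simp [reach_single]

lemma reach_replicate {T : Trans} {x : Letter} :
    ∀ {q : ℕ} {s t : ℕ}, Reach T s (List.replicate q x) t ↔ Pow T x q s t := by
  intro q
  induction q with
  | zero => intro s t; simp [Pow, reach_nil]
  | succ q ih =>
    intro s t
    have : List.replicate (q+1) x = List.replicate q x ++ [x] := by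
      rw [← List.replicate_succ' ]
    rw [this, reach_append]
    constructor
    · rintro ⟨m, hm, hr⟩
      exact ⟨m, ih.1 hm, reach_single.1 hr⟩
    · rintro ⟨m, hm, hrel⟩
      exact ⟨m, ih.2 hm, reach_single.2 hrel⟩

lemma pow_add {T : Trans} {x : Letter} {a b : ℕ} {s t : ℕ} :
    Pow T x (a + b) s t ↔ ∃ u, Pow T x a s u ∧ Pow T x b u t := by
  induction b generalizing t with
  | zero =>
    constructor
    · intro h; exact ⟨t, h, rfl⟩
    · rintro ⟨u, hu, h⟩; cases h; exact hu
  | succ b ih =>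
    constructor
    · rintro ⟨u, hu, hrel⟩
      rcases ih.1 hu with ⟨v, hv, hp⟩
      exact ⟨v, hv, u, hp, hrel⟩
    · rintro ⟨u, hu, v, hv, hrel⟩
      exact ⟨v, ih.2 ⟨u, hu, hv⟩, hrel⟩

end HS
namespace HS

/-- states appearing in the transition list -/
def SF (T : Trans) : Finset ℕ :=
  (T.map (fun tr => tr.1)).toFinset ∪ (T.map (fun tr => tr.2.2)).toFinset

lemma rel_mem_SF {T : Trans} {x : Letter} {s t : ℕ} (h : Rel T x s t) :
    s ∈ SF T ∧ t ∈ SF T := by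
  constructor
  · refine Finset.mem_union_left _ ?_
    rw [List.mem_toFinset, List.mem_map]
    exact ⟨(s, x, t), h, rfl⟩
  · refine Finset.mem_union_right _ ?_
    rw [List.mem_toFinset, List.mem_map]
    exact ⟨(s, x, t), h, rfl⟩

lemma pow_mem_SF {T : Trans} {x : Letter} {q : ℕ} (hq : 1 ≤ q) {s t : ℕ}
    (h : Pow T x q s t) : s ∈ SF T ∧ t ∈ SF T := by
  induction q generalizing t with
  | zero => omega
  | succ q ih =>
    rcases h with ⟨u, hu, hrel⟩
    rcases rel_mem_SF hrel with ⟨hu1, ht⟩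
    rcases Nat.eq_zero_or_pos q with h0 | h0
    · subst h0; cases hu; exact ⟨hu1, ht⟩
    · exact ⟨(ih h0 hu).1, ht⟩

lemma reach_mem_SF {T : Trans} {s t : ℕ} {w : Word} (hw : w ≠ []) (h : Reach T s w t) :
    t ∈ SF T := by
  rcases List.eq_nil_or_concat w with rfl | ⟨w', x, rfl⟩
  · exact absurd rfl hw
  · rw [List.concat_eq_append] at h
    rcases reach_append.1 h with ⟨m, _, hr⟩
    exact (rel_mem_SF (reach_single.1 hr)).2

/-! ### Eventual periodicity of powers -/

/-- the bound on the number of states (strict overcount) -/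
def nb (T : Trans) : ℕ := 2 * T.length + 1

lemma card_SF_lt (T : Trans) : (SF T).card < nb T := by
  have h1 : (SF T).card ≤ (T.map (fun tr => tr.1)).toFinset.card
      + (T.map (fun tr => tr.2.2)).toFinset.card := Finset.card_union_le _ _
  have h2 : (T.map (fun tr => tr.1)).toFinset.card ≤ T.length := by
    calc (T.map (fun tr => tr.1)).toFinset.card ≤ (T.map (fun tr => tr.1)).length :=
          List.toFinset_card_le _
      _ = T.length := List.length_map _
  have h3 : (T.map (fun tr => tr.2.2)).toFinset.card ≤ T.length := by
    calc (T.map (fun tr => tr.2.2)).toFinset.card ≤ (T.map (fun tr => tr.2.2)).length :=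
          List.toFinset_card_le _
      _ = T.length := List.length_map _
  unfold nb; omega

/-- the pigeonhole bound for relation powers -/
def Nb (T : Trans) : ℕ := 2 ^ (nb T * nb T) + 1

open Classical in
/-- the finite fingerprint of a relation power -/
noncomputable def powFinset (T : Trans) (x : Letter) (q : ℕ) : Finset (ℕ × ℕ) :=
  (SF T ×ˢ SF T).filter (fun p => Pow T x q p.1 p.2)

lemma pow_ext {T : Trans} {x : Letter} {i j : ℕ} (hi : 1 ≤ i) (hj : 1 ≤ j)
    (h : powFinset T x i = powFinset T x j) {s t : ℕ} :
    Pow T x i s t ↔ Pow T x j s t := by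
  classical
  constructor
  · intro hp
    rcases pow_mem_SF hi hp with ⟨hs, ht⟩
    have : (s, t) ∈ powFinset T x i := by
      simp [powFinset, Finset.mem_filter, Finset.mem_product, hs, ht, hp]
    rw [h] at this
    simp [powFinset, Finset.mem_filter] at this
    exact this.2
  · intro hp
    rcases pow_mem_SF hj hp with ⟨hs, ht⟩
    have : (s, t) ∈ powFinset T x j := by
      simp [powFinset, Finset.mem_filter, Finset.mem_product, hs, ht, hp]
    rw [← h] at this
    simp [powFinset, Finset.mem_filter] at this
    exact this.2

/-- Key periodicity lemma: there is a period `π ∈ [1, Nb T]` such that all powers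
of index `≥ Nb T` are invariant under shifting by `π`. -/
lemma exists_period (T : Trans) (x : Letter) :
    ∃ π, 1 ≤ π ∧ π ≤ Nb T ∧
      ∀ q, Nb T ≤ q → ∀ s t, (Pow T x (q + π) s t ↔ Pow T x q s t) := by
  classical
  -- pigeonhole on q ∈ [1, Nb T]
  have hcard : ((SF T ×ˢ SF T).powerset).card < (Finset.Icc 1 (Nb T)).card := by
    rw [Finset.card_powerset, Nat.card_Icc]
    have h1 : (SF T ×ˢ SF T).card < nb T * nb T + 1 := by
      have := card_SF_lt T
      have : (SF T ×ˢ SF T).card = (SF T).card * (SF T).card := Finset.card_product _ _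
      have hlt := card_SF_lt T
      nlinarith [card_SF_lt T, Finset.card_product (SF T) (SF T)]
    have h2 : 2 ^ (SF T ×ˢ SF T).card < 2 ^ (nb T * nb T) + 1 := by
      have : 2 ^ (SF T ×ˢ SF T).card ≤ 2 ^ (nb T * nb T) :=
        Nat.pow_le_pow_right (by norm_num) (by omega)
      omega
    simpa [Nb] using h2
  have hmaps : ∀ q ∈ Finset.Icc 1 (Nb T), powFinset T x q ∈ (SF T ×ˢ SF T).powerset := by
    intro q _
    exact Finset.mem_powerset.2 (Finset.filter_subset _ _)
  obtain ⟨i, hi, j, hj, hne, heq⟩ :=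
    Finset.exists_ne_map_eq_of_card_lt_of_maps_to hcard hmaps
  simp only [Finset.mem_Icc] at hi hj
  -- wlog i < j
  rcases lt_or_gt_of_ne hne with hlt | hlt
  case _ =>
    refine ⟨j - i, by omega, by omega, ?_⟩
    intro q hq s t
    -- q ≥ Nb T ≥ i ≥ 1; q + (j-i) ↔ q
    -- first: ∀ r, Pow (i + r) ↔ Pow (j + r)
    have hstep : ∀ r s t, Pow T x (i + r) s t ↔ Pow T x (j + r) s t := by
      intro r s t
      rw [pow_add, pow_add]
      constructor
      · rintro ⟨u, hu, hr⟩
        exact ⟨u, (pow_ext hi.1 hj.1 heq).1 hu, hr⟩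
      · rintro ⟨u, hu, hr⟩
        exact ⟨u, (pow_ext hi.1 hj.1 heq).2 hu, hr⟩
    have h1 : q + (j - i) = j + (q - i) := by omega
    have h2 : q = i + (q - i) := by omega
    rw [h1]
    rw [show (Pow T x q s t) = (Pow T x (i + (q - i)) s t) from by rw [← h2]]
    exact (hstep (q - i) s t).symm
  case _ =>
    refine ⟨i - j, by omega, by omega, ?_⟩
    intro q hq s t
    have hstep : ∀ r s t, Pow T x (j + r) s t ↔ Pow T x (i + r) s t := by
      intro r s t
      rw [pow_add, pow_add]
      constructor
      · rintro ⟨u, hu, hr⟩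
        exact ⟨u, (pow_ext hj.1 hi.1 heq.symm).1 hu, hr⟩
      · rintro ⟨u, hu, hr⟩
        exact ⟨u, (pow_ext hj.1 hi.1 heq.symm).2 hu, hr⟩
    have h1 : q + (i - j) = i + (q - j) := by omega
    have h2 : q = j + (q - j) := by omega
    rw [h1]
    rw [show (Pow T x q s t) = (Pow T x (j + (q - j)) s t) from by rw [← h2]]
    exact (hstep (q - j) s t).symm

end HS
namespace HS

def blockTok (pr : ℕ × ℕ) : Word := leftTok pr.1 ++ rightTok pr.2

lemma encode_eq (k : ℕ) (es : List (ℕ × ℕ)) :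
    encode k es = thresholdTok k ++ (es.map blockTok).flatten := rfl

lemma reach_thresholdTok {T : Trans} {k : ℕ} {s t : ℕ} :
    Reach T s (thresholdTok k) t ↔
      ∃ a b, Rel T Letter.tri s a ∧ Pow T Letter.one k a b ∧ Rel T Letter.dollar b t := by
  unfold thresholdTok
  rw [reach_cons]
  constructor
  · rintro ⟨a, h1, h2⟩
    rcases reach_append.1 h2 with ⟨b, hb, hbt⟩
    exact ⟨a, b, h1, reach_replicate.1 hb, reach_single.1 hbt⟩
  · rintro ⟨a, b, h1, h2, h3⟩
    exact ⟨a, h1, reach_append.2 ⟨b, reach_replicate.2 h2, reach_single.2 h3⟩⟩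

lemma reach_leftTok {T : Trans} {p : ℕ} {s t : ℕ} :
    Reach T s (leftTok p) t ↔
      ∃ a b, Rel T Letter.tri s a ∧ Pow T Letter.lett p a b ∧ Rel T Letter.hash b t := by
  unfold leftTok
  rw [reach_cons]
  constructor
  · rintro ⟨a, h1, h2⟩
    rcases reach_append.1 h2 with ⟨b, hb, hbt⟩
    exact ⟨a, b, h1, reach_replicate.1 hb, reach_single.1 hbt⟩
  · rintro ⟨a, b, h1, h2, h3⟩
    exact ⟨a, h1, reach_append.2 ⟨b, reach_replicate.2 h2, reach_single.2 h3⟩⟩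

lemma reach_rightTok {T : Trans} {q : ℕ} {s t : ℕ} :
    Reach T s (rightTok q) t ↔
      ∃ a b, Rel T Letter.tri s a ∧ Pow T Letter.lett q a b ∧ Rel T Letter.dollar b t := by
  unfold rightTok
  rw [reach_cons]
  constructor
  · rintro ⟨a, h1, h2⟩
    rcases reach_append.1 h2 with ⟨b, hb, hbt⟩
    exact ⟨a, b, h1, reach_replicate.1 hb, reach_single.1 hbt⟩
  · rintro ⟨a, b, h1, h2, h3⟩
    exact ⟨a, h1, reach_append.2 ⟨b, reach_replicate.2 h2, reach_single.2 h3⟩⟩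

/-- Reachability along a sequence of blocks. -/
def BRun (T : Trans) (es : List (ℕ × ℕ)) (s t : ℕ) : Prop :=
  Reach T s (es.map blockTok).flatten t

lemma brun_nil {T : Trans} {s t : ℕ} : BRun T [] s t ↔ t = s := by
  simp [BRun, reach_nil]

lemma brun_cons {T : Trans} {pr : ℕ × ℕ} {es : List (ℕ × ℕ)} {s t : ℕ} :
    BRun T (pr :: es) s t ↔ ∃ m, Reach T s (blockTok pr) m ∧ BRun T es m t := by
  unfold BRun
  rw [List.map_cons, List.flatten_cons, reach_append]

lemma brun_append {T : Trans} {es₁ es₂ : List (ℕ × ℕ)} {s t : ℕ} :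
    BRun T (es₁ ++ es₂) s t ↔ ∃ m, BRun T es₁ s m ∧ BRun T es₂ m t := by
  unfold BRun
  rw [List.map_append, List.flatten_append, reach_append]

lemma reach_encode {T : Trans} {k : ℕ} {es : List (ℕ × ℕ)} {s t : ℕ} :
    Reach T s (encode k es) t ↔
      ∃ m, Reach T s (thresholdTok k) m ∧ BRun T es m t := by
  rw [encode_eq, reach_append]; rfl

/-- The generic transport lemma: replacing the threshold and renaming the values
by functions that preserve power-reachability preserves acceptance. -/
lemma transport {T : Trans} {k k' : ℕ} {es : List (ℕ × ℕ)} {g : ℕ → ℕ}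
    (hk : ∀ s t, Pow T Letter.one k s t → Pow T Letter.one k' s t)
    (hg : ∀ pr ∈ es, ∀ s t,
      (Pow T Letter.lett pr.1 s t → Pow T Letter.lett (g pr.1) s t) ∧
      (Pow T Letter.lett pr.2 s t → Pow T Letter.lett (g pr.2) s t))
    {s t : ℕ} (h : Reach T s (encode k es) t) :
    Reach T s (encode k' (es.map (fun pr => (g pr.1, g pr.2)))) t := by
  rcases reach_encode.1 h with ⟨m, hth, hblocks⟩
  refine reach_encode.2 ⟨m, ?_, ?_⟩
  · rcases reach_thresholdTok.1 hth with ⟨a, b, h1, h2, h3⟩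
    exact reach_thresholdTok.2 ⟨a, b, h1, hk _ _ h2, h3⟩
  · clear hth h
    induction es generalizing m with
    | nil => simpa [brun_nil] using hblocks
    | cons pr es ih =>
      rcases brun_cons.1 hblocks with ⟨m₁, hb, hrest⟩
      rw [List.map_cons]
      refine brun_cons.2 ⟨m₁, ?_, ?_⟩
      · unfold blockTok at hb ⊢
        rcases reach_append.1 hb with ⟨mm, hl, hr⟩
        rcases reach_leftTok.1 hl with ⟨a, b, h1, h2, h3⟩
        rcases reach_rightTok.1 hr with ⟨a', b', h1', h2', h3'⟩
        refine reach_append.2 ⟨mm, ?_, ?_⟩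
        · exact reach_leftTok.2 ⟨a, b, h1, (hg pr (by simp) a b).1 h2, h3⟩
        · exact reach_rightTok.2 ⟨a', b', h1', (hg pr (by simp) a' b').2 h2', h3'⟩
      · exact ih (fun p hp s' t' => hg p (by simp [hp]) s' t') m₁ hrest

/-- Acceptance of an NFA, phrased via `Reach`. -/
def Accepts (M : NFAEnc) (w : Word) : Prop := ∃ qf ∈ M.2.2, Reach M.1 M.2.1 w qf

lemma accepts_iff_encLang {M : NFAEnc} {w : Word} : Accepts M w ↔ w ∈ encLang M :=
  Iff.rfl

end HS
namespace HS

/-- Covering formulation of the hitting set condition. -/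
def Cover (k : ℕ) (es : List (ℕ × ℕ)) : Prop :=
  ∃ R : Finset ℕ, R.card ≤ k ∧ ∀ pr ∈ es, ∃ pr' ∈ es, pr'.2 = pr.2 ∧ pr'.1 ∈ R

lemma hasHittingSet_iff_cover {k : ℕ} {es : List (ℕ × ℕ)} :
    HasHittingSet (hypOf es) k ↔ Cover k es := by
  constructor
  · rintro ⟨S, hSV, hcard, hhit⟩
    refine ⟨S, hcard, ?_⟩
    intro pr hpr
    have hq : pr.2 ∈ (es.map Prod.snd).toFinset := by
      rw [List.mem_toFinset, List.mem_map]; exact ⟨pr, hpr, rfl⟩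
    have he : ((es.filter (fun p => p.2 = pr.2)).map Prod.fst).toFinset ∈ (hypOf es).E := by
      unfold hypOf
      simp only [Finset.mem_image]
      exact ⟨pr.2, hq, rfl⟩
    rcases hhit _ he with ⟨v, hvS, hve⟩
    rw [List.mem_toFinset, List.mem_map] at hve
    rcases hve with ⟨pr', hpr', rfl⟩
    rw [List.mem_filter] at hpr'
    exact ⟨pr', hpr'.1, by simpa using hpr'.2, hvS⟩
  · rintro ⟨R, hcard, hcov⟩
    refine ⟨R ∩ (es.map Prod.fst).toFinset, Finset.inter_subset_right,
      le_trans (Finset.card_le_card Finset.inter_subset_left) hcard, ?_⟩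
    intro e he
    unfold hypOf at he
    simp only [Finset.mem_image] at he
    rcases he with ⟨q, hq, rfl⟩
    rw [List.mem_toFinset, List.mem_map] at hq
    rcases hq with ⟨pr, hpr, rfl⟩
    rcases hcov pr hpr with ⟨pr', hpr', hsnd, hR⟩
    refine ⟨pr'.1, ?_, ?_⟩
    · refine Finset.mem_inter.2 ⟨hR, ?_⟩
      rw [List.mem_toFinset, List.mem_map]; exact ⟨pr', hpr', rfl⟩
    · rw [List.mem_toFinset, List.mem_map]
      refine ⟨pr', ?_, rfl⟩
      rw [List.mem_filter]
      exact ⟨hpr', by simpa using hsnd⟩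

lemma cover_map {k : ℕ} {es : List (ℕ × ℕ)} {f : ℕ → ℕ} (h : Cover k es) :
    Cover k (es.map (fun pr => (f pr.1, f pr.2))) := by
  rcases h with ⟨R, hcard, hcov⟩
  refine ⟨R.image f, le_trans (Finset.card_image_le) hcard, ?_⟩
  intro pr hpr
  rw [List.mem_map] at hpr
  rcases hpr with ⟨pr₀, hpr₀, rfl⟩
  rcases hcov pr₀ hpr₀ with ⟨pr', hpr', hsnd, hR⟩
  refine ⟨(f pr'.1, f pr'.2), ?_, by simp [hsnd], Finset.mem_image_of_mem f hR⟩
  rw [List.mem_map]; exact ⟨pr', hpr', rfl⟩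

lemma cover_of_toFinset_eq {k : ℕ} {es es' : List (ℕ × ℕ)}
    (h : es.toFinset = es'.toFinset) (hc : Cover k es) : Cover k es' := by
  rcases hc with ⟨R, hcard, hcov⟩
  refine ⟨R, hcard, ?_⟩
  intro pr hpr
  have hpr0 : pr ∈ es := by
    rw [← List.mem_toFinset, h, List.mem_toFinset]; exact hpr
  rcases hcov pr hpr0 with ⟨pr', hpr', hsnd, hR⟩
  have hpr'' : pr' ∈ es' := by
    rw [← List.mem_toFinset, ← h, List.mem_toFinset]; exact hpr'
  exact ⟨pr', hpr'', hsnd, hR⟩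

lemma cover_of_card_le {k : ℕ} {es : List (ℕ × ℕ)}
    (h : (es.map Prod.fst).toFinset.card ≤ k) : Cover k es := by
  refine ⟨(es.map Prod.fst).toFinset, h, ?_⟩
  intro pr hpr
  refine ⟨pr, hpr, rfl, ?_⟩
  rw [List.mem_toFinset, List.mem_map]; exact ⟨pr, hpr, rfl⟩

end HS
namespace HS

lemma blockTok_ne_nil (pr : ℕ × ℕ) : blockTok pr ≠ [] := by
  unfold blockTok leftTok
  simp

/-- the thread of boundary states of a run across blocks -/
def Thread (T : Trans) : List (ℕ × ℕ) → ℕ → List ℕ → ℕ → Prop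
  | [], s, L, t => L = [] ∧ t = s
  | pr :: es, s, L, t =>
      ∃ m L', L = m :: L' ∧ Reach T s (blockTok pr) m ∧ Thread T es m L' t

lemma thread_exists {T : Trans} {es : List (ℕ × ℕ)} :
    ∀ {s t : ℕ}, BRun T es s t → ∃ L, Thread T es s L t := by
  induction es with
  | nil => intro s t h; exact ⟨[], rfl, brun_nil.1 h⟩
  | cons pr es ih =>
    intro s t h
    rcases brun_cons.1 h with ⟨m, hb, hrest⟩
    rcases ih hrest with ⟨L', hL'⟩
    exact ⟨m :: L', m, L', rfl, hb, hL'⟩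

lemma thread_length {T : Trans} {es : List (ℕ × ℕ)} :
    ∀ {s t : ℕ} {L : List ℕ}, Thread T es s L t → L.length = es.length := by
  induction es with
  | nil => rintro s t L ⟨rfl, rfl⟩; rfl
  | cons pr es ih =>
    rintro s t L ⟨m, L', rfl, _, hth⟩
    simp [ih hth]

lemma thread_brun {T : Trans} {es : List (ℕ × ℕ)} :
    ∀ {s t : ℕ} {L : List ℕ}, Thread T es s L t → BRun T es s t := by
  induction es with
  | nil => rintro s t L ⟨rfl, rfl⟩; exact brun_nil.2 rfl
  | cons pr es ih =>
    rintro s t L ⟨m, L', rfl, hb, hth⟩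
    exact brun_cons.2 ⟨m, hb, ih hth⟩

lemma thread_mem_SF {T : Trans} {es : List (ℕ × ℕ)} :
    ∀ {s t : ℕ} {L : List ℕ}, Thread T es s L t → ∀ x ∈ L, x ∈ SF T := by
  induction es with
  | nil => rintro s t L ⟨rfl, rfl⟩ x hx; cases hx
  | cons pr es ih =>
    rintro s t L ⟨m, L', rfl, hb, hth⟩ x hx
    rcases List.mem_cons.1 hx with rfl | hx
    · exact reach_mem_SF (blockTok_ne_nil pr) hb
    · exact ih hth x hx

lemma thread_split_at {T : Trans} {es : List (ℕ × ℕ)} :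
    ∀ {s t : ℕ} {L : List ℕ}, Thread T es s L t → ∀ i, i < es.length →
      Thread T (es.take (i+1)) s (L.take (i+1)) (L.getD i 0) ∧
      Thread T (es.drop (i+1)) (L.getD i 0) (L.drop (i+1)) t := by
  induction es with
  | nil => intro s t L h i hi; simp at hi
  | cons pr es ih =>
    rintro s t L ⟨m, L', rfl, hb, hth⟩ i hi
    cases i with
    | zero =>
      constructor
      · exact ⟨m, [], by simp, hb, rfl, rfl⟩
      · simpa using hth
    | succ i =>
      have hi' : i < es.length := by simpa using hi
      rcases ih hth i hi' with ⟨h1, h2⟩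
      constructor
      · rw [List.take_succ_cons, List.take_succ_cons, List.getD_cons_succ]
        exact ⟨m, L'.take (i+1), rfl, hb, h1⟩
      · rw [List.getD_cons_succ]
        exact h2

lemma brun_delete {T : Trans} {es : List (ℕ × ℕ)} {s t : ℕ} {L : List ℕ}
    (h : Thread T es s L t) {i j : ℕ} (hij : i < j) (hj : j < es.length)
    (heq : L.getD i 0 = L.getD j 0) :
    BRun T (es.take (i+1) ++ es.drop (j+1)) s t := by
  obtain ⟨h1, h2⟩ := thread_split_at h j hj
  have hlen : (es.take (j+1)).length = j + 1 := by
    rw [List.length_take]; omega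
  have hi' : i < (es.take (j+1)).length := by omega
  obtain ⟨g1, _⟩ := thread_split_at h1 i hi'
  have e1 : (es.take (j+1)).take (i+1) = es.take (i+1) := by
    rw [List.take_take]; congr 1; omega
  have hLlen : L.length = es.length := thread_length h
  have e2 : (L.take (j+1)).getD i 0 = L.getD i 0 := by
    have hiL : i < (L.take (j+1)).length := by rw [List.length_take]; omega
    rw [List.getD_eq_getElem _ _ hiL, List.getElem_take, List.getD_eq_getElem _ _ (by omega)]
  rw [e1, e2] at g1
  refine brun_append.2 ⟨L.getD i 0, thread_brun g1, ?_⟩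
  rw [heq]
  exact thread_brun h2

end HS
namespace HS

def dflt : ℕ × ℕ := (0, 0)

open scoped Classical in
/-- essential indices: last occurrences of each value -/
noncomputable def Ess (es : List (ℕ × ℕ)) : Finset ℕ :=
  (Finset.range es.length).filter
    (fun a => ∀ b, a < b → b < es.length → es.getD b dflt ≠ es.getD a dflt)

lemma mem_Ess {es : List (ℕ × ℕ)} {a : ℕ} :
    a ∈ Ess es ↔ a < es.length ∧
      ∀ b, a < b → b < es.length → es.getD b dflt ≠ es.getD a dflt := by
  classical
  unfold Ess
  rw [Finset.mem_filter, Finset.mem_range]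

lemma ess_card_le (es : List (ℕ × ℕ)) : (Ess es).card ≤ es.toFinset.card := by
  classical
  refine Finset.card_le_card_of_injOn (fun a => es.getD a dflt) ?_ ?_
  · intro a ha
    rw [Finset.mem_coe, mem_Ess] at ha
    show es.getD a dflt ∈ es.toFinset
    rw [List.mem_toFinset, List.getD_eq_getElem _ _ ha.1]
    exact List.getElem_mem _
  · intro a ha b hb hab
    rw [Finset.mem_coe, mem_Ess] at ha hb
    by_contra hne
    rcases Nat.lt_or_ge a b with h | h
    · exact ha.2 b h hb.1 hab.symm
    · have h' : b < a := by omega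
      exact hb.2 a h' ha.1 hab

lemma ess_last_occ (es : List (ℕ × ℕ)) :
    ∀ c, c < es.length → ∃ b, c ≤ b ∧ b < es.length ∧
      es.getD b dflt = es.getD c dflt ∧ b ∈ Ess es := by
  intro c hc
  by_cases h : ∀ b, c < b → b < es.length → es.getD b dflt ≠ es.getD c dflt
  · exact ⟨c, le_refl c, hc, rfl, mem_Ess.2 ⟨hc, h⟩⟩
  · push_neg at h
    rcases h with ⟨b, hcb, hb, heq⟩
    have : es.length - b < es.length - c := by omega
    rcases ess_last_occ es b hb with ⟨b', h1, h2, h3, h4⟩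
    exact ⟨b', by omega, h2, by rw [h3, heq], h4⟩
termination_by c _ => es.length - c

/-- existence of an essential-free window -/
lemma exists_free_window (es : List (ℕ × ℕ)) (W : ℕ) (hW : 1 ≤ W)
    (hlen : (es.toFinset.card + 1) * W + W ≤ es.length) :
    ∃ a, a + W ≤ es.length ∧ ∀ e ∈ Ess es, ¬(a ≤ e ∧ e < a + W) := by
  classical
  by_contra hcon
  push_neg at hcon
  have hwin : ∀ t : ℕ, t ≤ es.toFinset.card → ∃ e ∈ Ess es, t * W ≤ e ∧ e < t * W + W := by
    intro t ht
    have h1 : t * W + W ≤ es.length := by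
      have h2 : t * W ≤ es.toFinset.card * W := Nat.mul_le_mul_right W ht
      have h3 := hlen
      rw [Nat.succ_mul] at h3
      omega
    rcases hcon (t * W) h1 with ⟨e, he, h2, h3⟩
    exact ⟨e, he, h2, h3⟩
  choose f hf1 hf2 hf3 using hwin
  have hcard : (Ess es).card < (Finset.range (es.toFinset.card + 1)).card := by
    rw [Finset.card_range]
    have := ess_card_le es
    omega
  have hmaps : ∀ t ∈ Finset.range (es.toFinset.card + 1),
      (fun t => if h : t ≤ es.toFinset.card then f t h else 0) t ∈ Ess es := by
    intro t ht
    rw [Finset.mem_range] at ht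
    have h : t ≤ es.toFinset.card := by omega
    simp only [dif_pos h]
    exact hf1 t h
  obtain ⟨t₁, ht₁, t₂, ht₂, hne, heq⟩ :=
    Finset.exists_ne_map_eq_of_card_lt_of_maps_to hcard hmaps
  rw [Finset.mem_range] at ht₁ ht₂
  have h₁ : t₁ ≤ es.toFinset.card := by omega
  have h₂ : t₂ ≤ es.toFinset.card := by omega
  simp only [dif_pos h₁, dif_pos h₂] at heq
  have a1 := hf2 t₁ h₁; have a2 := hf3 t₁ h₁
  have b1 := hf2 t₂ h₂; have b2 := hf3 t₂ h₂
  rw [heq] at a1 a2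
  rcases Nat.lt_or_ge t₁ t₂ with h | h
  · have hh : (t₁ + 1) * W ≤ t₂ * W := Nat.mul_le_mul_right W (by omega)
    rw [Nat.succ_mul] at hh
    omega
  · have h' : t₂ < t₁ := by omega
    have hh : (t₂ + 1) * W ≤ t₁ * W := Nat.mul_le_mul_right W (by omega)
    rw [Nat.succ_mul] at hh
    omega

/-- deleting a non-essential segment preserves the set of pairs -/
lemma toFinset_delete {es : List (ℕ × ℕ)} {i j : ℕ} (hij : i < j) (hj : j < es.length)
    (hness : ∀ c, i + 1 ≤ c → c ≤ j → c ∉ Ess es) :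
    (es.take (i+1) ++ es.drop (j+1)).toFinset = es.toFinset := by
  classical
  apply Finset.Subset.antisymm
  · intro pr hpr
    rw [List.mem_toFinset] at hpr ⊢
    rcases List.mem_append.1 hpr with h | h
    · exact List.take_subset _ _ h
    · exact List.drop_subset _ _ h
  · intro pr hpr
    rw [List.mem_toFinset] at hpr ⊢
    rcases List.mem_iff_getElem.1 hpr with ⟨c, hc, rfl⟩
    rcases ess_last_occ es c hc with ⟨b, hcb, hb, hbeq, hbess⟩
    have hbout : b ≤ i ∨ j + 1 ≤ b := by
      by_contra hcon
      push_neg at hcon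
      exact hness b (by omega) (by omega) hbess
    rw [List.getD_eq_getElem _ _ hb, List.getD_eq_getElem _ _ hc] at hbeq
    rw [← hbeq]
    rcases hbout with h | h
    · apply List.mem_append.2
      left
      have hb' : b < (es.take (i+1)).length := by rw [List.length_take]; omega
      rw [List.mem_iff_getElem]
      exact ⟨b, hb', by rw [List.getElem_take]⟩
    · apply List.mem_append.2
      right
      have hb' : b - (j+1) < (es.drop (j+1)).length := by rw [List.length_drop]; omega
      rw [List.mem_iff_getElem]
      refine ⟨b - (j+1), hb', ?_⟩
      rw [List.getElem_drop]
      congr 1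
      omega

/-- Main deletion step: a long word can be shortened preserving acceptance and
the set of pairs. -/
lemma exists_shorter {T : Trans} {k : ℕ} {es : List (ℕ × ℕ)} {s t : ℕ}
    (hacc : Reach T s (encode k es) t)
    (hlong : (es.toFinset.card + 1) * nb T + nb T ≤ es.length) :
    ∃ es', Reach T s (encode k es') t ∧ es'.toFinset = es.toFinset ∧
      es'.length < es.length ∧ es'.Sublist es := by
  classical
  have hnb : 1 ≤ nb T := by unfold nb; omega
  rcases reach_encode.1 hacc with ⟨m₀, hth, hbr⟩
  rcases thread_exists hbr with ⟨L, hL⟩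
  have hLlen : L.length = es.length := thread_length hL
  obtain ⟨a, haW, hafree⟩ := exists_free_window es (nb T) hnb hlong
  -- pigeonhole on boundary states with indices in [a, a + nb T - 1]
  have hcard : (SF T).card < (Finset.Icc a (a + nb T - 1)).card := by
    rw [Nat.card_Icc]
    have := card_SF_lt T
    omega
  have hmaps : ∀ c ∈ Finset.Icc a (a + nb T - 1), L.getD c 0 ∈ SF T := by
    intro c hc
    rw [Finset.mem_Icc] at hc
    have hcL : c < L.length := by omega
    rw [List.getD_eq_getElem _ _ hcL]
    exact thread_mem_SF hL _ (List.getElem_mem _)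
  obtain ⟨i₀, hi₀, j₀, hj₀, hne, heq⟩ :=
    Finset.exists_ne_map_eq_of_card_lt_of_maps_to hcard hmaps
  rw [Finset.mem_Icc] at hi₀ hj₀
  -- wlog i < j
  obtain ⟨i, j, hij, hi, hj, heq'⟩ : ∃ i j, i < j ∧ (a ≤ i ∧ i ≤ a + nb T - 1) ∧
      (a ≤ j ∧ j ≤ a + nb T - 1) ∧ L.getD i 0 = L.getD j 0 := by
    rcases Nat.lt_or_ge i₀ j₀ with h | h
    · exact ⟨i₀, j₀, h, hi₀, hj₀, heq⟩
    · exact ⟨j₀, i₀, by omega, hj₀, hi₀, heq.symm⟩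
  have hjlen : j < es.length := by omega
  have hbr' := brun_delete hL hij hjlen heq'
  refine ⟨es.take (i+1) ++ es.drop (j+1), ?_, ?_, ?_, ?_⟩
  · exact reach_encode.2 ⟨m₀, hth, hbr'⟩
  · exact toFinset_delete hij hjlen
      (fun c h1 h2 hcess => hafree c hcess ⟨by omega, by omega⟩)
  · rw [List.length_append, List.length_take, List.length_drop]
    omega
  · have h1 : (es.drop (j+1)).Sublist (es.drop (i+1)) := by
      rw [show j + 1 = (i + 1) + (j - i) by omega, ← List.drop_drop]
      exact List.drop_sublist _ _
    have h2 := List.Sublist.append_left h1 (es.take (i+1))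
    rw [List.take_append_drop] at h2
    exact h2

end HS
namespace HS

/-- bound on the number of pairs -/
def Mb (T : Trans) : ℕ := ((2 * Nb T + 1) * (2 * Nb T + 1) + 1) * nb T + nb T

def Good (T : Trans) (k : ℕ) (es : List (ℕ × ℕ)) : Prop :=
  Cover k es ∨ 2 * Nb T ≤ k

def Small (T : Trans) (k : ℕ) (es : List (ℕ × ℕ)) : Prop :=
  k ≤ 3 * Nb T ∧ es.length ≤ Mb T ∧ ∀ pr ∈ es, pr.1 ≤ 2 * Nb T ∧ pr.2 ≤ 2 * Nb T

lemma sum_map_le {α : Type} (f g : α → ℕ) :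
    ∀ (es : List α), (∀ a ∈ es, f a ≤ g a) →
      (es.map f).sum ≤ (es.map g).sum := by
  intro es
  induction es with
  | nil => intro _; simp
  | cons a es ih =>
    intro h
    simp only [List.map_cons, List.sum_cons]
    have h1 := h a (by simp)
    have h2 := ih (fun b hb => h b (by simp [hb]))
    omega

lemma sum_map_lt {α : Type} (f g : α → ℕ) :
    ∀ (es : List α), (∀ a ∈ es, f a ≤ g a) → (∃ a ∈ es, f a < g a) →
      (es.map f).sum < (es.map g).sum := by
  intro es
  induction es with
  | nil => intro _ h2; simp at h2
  | cons a es ih =>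
    intro h h2
    simp only [List.map_cons, List.sum_cons]
    rcases h2 with ⟨b, hb, hlt⟩
    rcases List.mem_cons.1 hb with rfl | hb'
    · have := sum_map_le f g es (fun c hc => h c (by simp [hc]))
      omega
    · have h1 := h a (by simp)
      have := ih (fun c hc => h c (by simp [hc])) ⟨b, hb', hlt⟩
      omega

/-- substitute value `v` by `v - π` -/
def substVal (v π : ℕ) : ℕ → ℕ := fun x => if x = v then v - π else x

lemma map_pair_id (es : List (ℕ × ℕ)) :
    es.map (fun pr => ((fun x => x) pr.1, (fun x => x) pr.2)) = es := by
  simp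

/-- Completeness: every accepted good instance can be shrunk to a small one. -/
lemma completeness (M : NFAEnc) (π₁ π₂ : ℕ)
    (hπ₁a : 1 ≤ π₁) (hπ₁b : π₁ ≤ Nb M.1)
    (hπ₁ : ∀ q, Nb M.1 ≤ q → ∀ s t,
      Pow M.1 Letter.one (q + π₁) s t ↔ Pow M.1 Letter.one q s t)
    (hπ₂a : 1 ≤ π₂) (hπ₂b : π₂ ≤ Nb M.1)
    (hπ₂ : ∀ q, Nb M.1 ≤ q → ∀ s t,
      Pow M.1 Letter.lett (q + π₂) s t ↔ Pow M.1 Letter.lett q s t)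
    (k : ℕ) (es : List (ℕ × ℕ))
    (hacc : Accepts M (encode k es)) (hgood : Good M.1 k es) :
    ∃ k' es', Accepts M (encode k' es') ∧ Good M.1 k' es' ∧ Small M.1 k' es' := by
  by_cases hk : 3 * Nb M.1 < k
  · -- decrement the threshold
    have htrans : ∀ s t, Pow M.1 Letter.one k s t → Pow M.1 Letter.one (k - π₁) s t := by
      intro s t h
      have hq := hπ₁ (k - π₁) (by omega) s t
      rw [show k = (k - π₁) + π₁ by omega] at h
      exact hq.1 h
    have hacc' : Accepts M (encode (k - π₁) es) := by
      rcases hacc with ⟨qf, hqf, hr⟩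
      refine ⟨qf, hqf, ?_⟩
      have := transport (g := fun x => x) htrans
        (fun pr _ s t => ⟨fun h => h, fun h => h⟩) hr
      rwa [map_pair_id] at this
    have hdec : k - π₁ < k := by omega
    exact completeness M π₁ π₂ hπ₁a hπ₁b hπ₁ hπ₂a hπ₂b hπ₂ (k - π₁) es hacc'
      (Or.inr (by omega))
  · by_cases hv : ∃ pr ∈ es, 2 * Nb M.1 < pr.1 ∨ 2 * Nb M.1 < pr.2
    · -- decrement a large value
      obtain ⟨v, hvmem, hvbig⟩ : ∃ v, (∃ pr ∈ es, pr.1 = v ∨ pr.2 = v) ∧ 2 * Nb M.1 < v := by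
        rcases hv with ⟨pr₀, h₀, hc⟩
        rcases hc with hc | hc
        · exact ⟨pr₀.1, ⟨pr₀, h₀, Or.inl rfl⟩, hc⟩
        · exact ⟨pr₀.2, ⟨pr₀, h₀, Or.inr rfl⟩, hc⟩
      have hgle : ∀ x, substVal v π₂ x ≤ x := by
        intro x
        by_cases hx : x = v <;> simp [substVal, hx]
      have hgtr : ∀ x s t, Pow M.1 Letter.lett x s t →
          Pow M.1 Letter.lett (substVal v π₂ x) s t := by
        intro x s t h
        by_cases hx : x = v
        · subst hx
          unfold substVal
          simp only [if_pos rfl]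
          have hq := hπ₂ (x - π₂) (by omega) s t
          rw [show x = (x - π₂) + π₂ by omega] at h
          exact hq.1 h
        · simpa [substVal, hx] using h
      have hacc' : Accepts M (encode k (es.map (fun pr => (substVal v π₂ pr.1, substVal v π₂ pr.2)))) := by
        rcases hacc with ⟨qf, hqf, hr⟩
        exact ⟨qf, hqf, transport (fun s t h => h)
          (fun pr _ s t => ⟨hgtr pr.1 s t, hgtr pr.2 s t⟩) hr⟩
      have hgood' : Good M.1 k (es.map (fun pr => (substVal v π₂ pr.1, substVal v π₂ pr.2))) := by
        rcases hgood with hcov | hbig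
        · exact Or.inl (cover_map hcov)
        · exact Or.inr hbig
      -- measure decreases
      have hsum : ((es.map (fun pr => (substVal v π₂ pr.1, substVal v π₂ pr.2))).map
          (fun pr => pr.1 + pr.2 + 1)).sum < (es.map (fun pr => pr.1 + pr.2 + 1)).sum := by
        rw [List.map_map]
        have : ((fun pr : ℕ × ℕ => pr.1 + pr.2 + 1) ∘ (fun pr : ℕ × ℕ => (substVal v π₂ pr.1, substVal v π₂ pr.2)))
            = fun pr : ℕ × ℕ => substVal v π₂ pr.1 + substVal v π₂ pr.2 + 1 := by
          funext pr; rfl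
        rw [this]
        apply sum_map_lt
        · intro a _
          have := hgle a.1; have := hgle a.2
          omega
        · rcases hvmem with ⟨pr₀, h₀, hc⟩
          refine ⟨pr₀, h₀, ?_⟩
          have hgv : substVal v π₂ v = v - π₂ := by simp [substVal]
          rcases hc with hc | hc
          · rw [hc, hgv]
            have := hgle pr₀.2
            omega
          · rw [hc, hgv]
            have := hgle pr₀.1
            omega
      have hlen : (es.map (fun pr => (substVal v π₂ pr.1, substVal v π₂ pr.2))).length = es.length := by
        rw [List.length_map]
      exact completeness M π₁ π₂ hπ₁a hπ₁b hπ₁ hπ₂a hπ₂b hπ₂ k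
        (es.map (fun pr => (substVal v π₂ pr.1, substVal v π₂ pr.2))) hacc' hgood'
    · by_cases hm : Mb M.1 < es.length
      · -- delete a segment
        have hvals : ∀ pr ∈ es, pr.1 ≤ 2 * Nb M.1 ∧ pr.2 ≤ 2 * Nb M.1 := by
          push_neg at hv
          intro pr hpr
          have := hv pr hpr
          omega
        have hτ : es.toFinset.card ≤ (2 * Nb M.1 + 1) * (2 * Nb M.1 + 1) := by
          have hsub : es.toFinset ⊆
              (Finset.range (2 * Nb M.1 + 1)) ×ˢ (Finset.range (2 * Nb M.1 + 1)) := by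
            intro pr hpr
            rw [List.mem_toFinset] at hpr
            rw [Finset.mem_product, Finset.mem_range, Finset.mem_range]
            have := hvals pr hpr
            omega
          calc es.toFinset.card ≤ _ := Finset.card_le_card hsub
            _ = (2 * Nb M.1 + 1) * (2 * Nb M.1 + 1) := by
                rw [Finset.card_product, Finset.card_range]
        have hlong : (es.toFinset.card + 1) * nb M.1 + nb M.1 ≤ es.length := by
          have h1 : (es.toFinset.card + 1) * nb M.1
              ≤ ((2 * Nb M.1 + 1) * (2 * Nb M.1 + 1) + 1) * nb M.1 :=
            Nat.mul_le_mul_right _ (by omega)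
          unfold Mb at hm
          omega
        rcases hacc with ⟨qf, hqf, hr⟩
        obtain ⟨es', hr', hfin, hlen, hsub⟩ := exists_shorter hr hlong
        have hacc' : Accepts M (encode k es') := ⟨qf, hqf, hr'⟩
        have hgood' : Good M.1 k es' := by
          rcases hgood with hcov | hbig
          · exact Or.inl (cover_of_toFinset_eq hfin.symm hcov)
          · exact Or.inr hbig
        have hsum : ((es'.map (fun pr => pr.1 + pr.2 + 1)).sum
            ≤ (es.map (fun pr => pr.1 + pr.2 + 1)).sum) := by
          apply List.Sublist.sum_le_sum
          · exact List.Sublist.map _ hsub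
          · intro a _; omega
        exact completeness M π₁ π₂ hπ₁a hπ₁b hπ₁ hπ₂a hπ₂b hπ₂ k es' hacc' hgood'
      · -- already small
        push_neg at hv hm hk
        refine ⟨k, es, hacc, hgood, hk, hm, ?_⟩
        intro pr hpr
        have := hv pr hpr
        omega
termination_by k + (es.map (fun pr => pr.1 + pr.2 + 1)).sum + es.length
decreasing_by
  · omega
  · rw [hlen]; omega
  · omega

end HS
namespace HS

/-- the target predicate -/
def P (M : NFAEnc) : Prop :=
  ∃ w : Word, w ∈ encLang M ∧ w ∈ Enc ∧
    ∃ (H : FinHypergraph) (k : ℕ), decodesToHyp w H k ∧ HasHittingSet H k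

lemma soundness (M : NFAEnc) (k : ℕ) (es : List (ℕ × ℕ))
    (hacc : Accepts M (encode k es)) (hgood : Good M.1 k es) : P M := by
  rcases hgood with hcov | hbig
  · exact ⟨encode k es, hacc, ⟨k, es, rfl⟩, hypOf es, k, ⟨es, rfl, rfl⟩,
      hasHittingSet_iff_cover.2 hcov⟩
  · obtain ⟨π₁, hπa, hπb, hπ⟩ := exists_period M.1 Letter.one
    have hup : ∀ c s t, Pow M.1 Letter.one k s t →
        Pow M.1 Letter.one (k + c * π₁) s t := by
      intro c
      induction c with
      | zero => intro s t h; simpa using h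
      | succ c ih =>
        intro s t h
        have h1 := ih s t h
        have h2 := (hπ (k + c * π₁) (by omega) s t).2 h1
        rw [show k + (c+1) * π₁ = k + c * π₁ + π₁ by ring]
        exact h2
    have hacc' : Accepts M (encode (k + es.length * π₁) es) := by
      rcases hacc with ⟨qf, hqf, hr⟩
      refine ⟨qf, hqf, ?_⟩
      have := transport (g := fun x => x) (hup es.length)
        (fun pr _ s t => ⟨fun h => h, fun h => h⟩) hr
      rwa [map_pair_id] at this
    have hcov : Cover (k + es.length * π₁) es := by
      apply cover_of_card_le
      have h1 : (es.map Prod.fst).toFinset.card ≤ es.length := by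
        calc (es.map Prod.fst).toFinset.card ≤ (es.map Prod.fst).length :=
            List.toFinset_card_le _
          _ = es.length := List.length_map _
      have h2 : es.length * 1 ≤ es.length * π₁ := Nat.mul_le_mul_left _ hπa
      omega
    exact ⟨encode (k + es.length * π₁) es, hacc', ⟨k + es.length * π₁, es, rfl⟩,
      hypOf es, k + es.length * π₁, ⟨es, rfl, rfl⟩, hasHittingSet_iff_cover.2 hcov⟩

/-- bounded witness predicate -/
def BddWitness (M : NFAEnc) : Prop :=
  ∃ k es, k ≤ 3 * Nb M.1 ∧ es.length ≤ Mb M.1 ∧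
    (∀ pr ∈ es, pr.1 ≤ 2 * Nb M.1 ∧ pr.2 ≤ 2 * Nb M.1) ∧
    Accepts M (encode k es) ∧ (Cover k es ∨ 2 * Nb M.1 ≤ k)

lemma P_iff_bdd (M : NFAEnc) : P M ↔ BddWitness M := by
  constructor
  · rintro ⟨w, hL, hEnc, H, k, ⟨es, rfl, rfl⟩, hhit⟩
    obtain ⟨π₁, hπ₁a, hπ₁b, hπ₁⟩ := exists_period M.1 Letter.one
    obtain ⟨π₂, hπ₂a, hπ₂b, hπ₂⟩ := exists_period M.1 Letter.lett
    obtain ⟨k', es', hacc', hgood', hsmall'⟩ :=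
      completeness M π₁ π₂ hπ₁a hπ₁b hπ₁ hπ₂a hπ₂b hπ₂ k es hL
        (Or.inl (hasHittingSet_iff_cover.1 hhit))
    exact ⟨k', es', hsmall'.1, hsmall'.2.1, hsmall'.2.2, hacc', hgood'⟩
  · rintro ⟨k, es, _, _, _, hacc, hgood⟩
    exact soundness M k es hacc hgood

end HS
namespace HS

def anyB {α : Type} (l : List α) (f : α → Bool) : Bool :=
  l.foldl (fun b x => b || f x) false

def allB {α : Type} (l : List α) (f : α → Bool) : Bool :=
  l.foldl (fun b x => b && f x) true

lemma foldl_or {α : Type} (f : α → Bool) :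
    ∀ (l : List α) (b : Bool), l.foldl (fun b x => b || f x) b = (b || l.any f) := by
  intro l
  induction l with
  | nil => intro b; simp
  | cons a l ih => intro b; simp [List.foldl_cons, ih, Bool.or_assoc]

lemma foldl_and {α : Type} (f : α → Bool) :
    ∀ (l : List α) (b : Bool), l.foldl (fun b x => b && f x) b = (b && l.all f) := by
  intro l
  induction l with
  | nil => intro b; simp
  | cons a l ih => intro b; simp [List.foldl_cons, ih, Bool.and_assoc]

lemma anyB_iff {α : Type} {l : List α} {f : α → Bool} :
    anyB l f = true ↔ ∃ a ∈ l, f a = true := by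
  rw [anyB, foldl_or, Bool.false_or, List.any_eq_true]

lemma allB_iff {α : Type} {l : List α} {f : α → Bool} :
    allB l f = true ↔ ∀ a ∈ l, f a = true := by
  rw [allB, foldl_and, Bool.true_and, List.all_eq_true]

def memB (a : ℕ) (l : List ℕ) : Bool := anyB l (fun b => decide (b = a))

lemma memB_iff {a : ℕ} {l : List ℕ} : memB a l = true ↔ a ∈ l := by
  rw [memB, anyB_iff]
  constructor
  · rintro ⟨b, hb, hba⟩
    rw [decide_eq_true_eq] at hba
    rwa [hba] at hb
  · intro h
    exact ⟨a, h, by simp⟩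

def stepB (T : Trans) (S : List ℕ) (x : Letter) : List ℕ :=
  T.foldr (fun tr acc =>
    if memB tr.1 S && decide (tr.2.1 = x) then tr.2.2 :: acc else acc) []

lemma mem_stepB {T : Trans} {S : List ℕ} {x : Letter} {q : ℕ} :
    q ∈ stepB T S x ↔ ∃ s ∈ S, (s, x, q) ∈ T := by
  induction T with
  | nil => simp [stepB]
  | cons tr T ih =>
    unfold stepB at ih ⊢
    rw [List.foldr_cons]
    by_cases hc : (memB tr.1 S && decide (tr.2.1 = x)) = true
    · rw [if_pos hc]
      rw [Bool.and_eq_true, memB_iff, decide_eq_true_eq] at hc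
      constructor
      · intro hq
        rcases List.mem_cons.1 hq with rfl | hq
        · exact ⟨tr.1, hc.1, by rw [← hc.2]; exact List.mem_cons_self⟩
        · rcases ih.1 hq with ⟨s, hs, hmem⟩
          exact ⟨s, hs, List.mem_cons_of_mem _ hmem⟩
      · rintro ⟨s, hs, hmem⟩
        rcases List.mem_cons.1 hmem with heq | hmem
        · rw [← heq]
          exact List.mem_cons_self
        · exact List.mem_cons_of_mem _ (ih.2 ⟨s, hs, hmem⟩)
    · rw [if_neg hc]
      rw [ih]
      constructor
      · rintro ⟨s, hs, hmem⟩; exact ⟨s, hs, List.mem_cons_of_mem _ hmem⟩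
      · rintro ⟨s, hs, hmem⟩
        rcases List.mem_cons.1 hmem with heq | hmem
        · exfalso
          apply hc
          rw [Bool.and_eq_true, memB_iff, decide_eq_true_eq]
          have h1 : tr.1 = s := by rw [← heq]
          have h2 : tr.2.1 = x := by rw [← heq]
          exact ⟨h1 ▸ hs, h2⟩
        · exact ⟨s, hs, hmem⟩

lemma stepB_correct (T : Trans) (S : List ℕ) (x : Letter) :
    {q | q ∈ stepB T S x} = encStep T {s | s ∈ S} x := by
  ext q
  rw [Set.mem_setOf_eq, mem_stepB]
  rfl

lemma runB_correct (T : Trans) :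
    ∀ (w : Word) (S : List ℕ) (q : ℕ),
      q ∈ w.foldl (stepB T) S ↔ q ∈ w.foldl (encStep T) {s | s ∈ S} := by
  intro w
  induction w with
  | nil => intro S q; rfl
  | cons x w ih =>
    intro S q
    rw [List.foldl_cons, List.foldl_cons, ih, stepB_correct]

def acceptB (M : NFAEnc) (w : Word) : Bool :=
  anyB M.2.2 (fun qf => memB qf (w.foldl (stepB M.1) [M.2.1]))

lemma acceptB_iff {M : NFAEnc} {w : Word} : acceptB M w = true ↔ Accepts M w := by
  rw [acceptB, anyB_iff]
  unfold Accepts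
  constructor
  · rintro ⟨qf, hqf, hmem⟩
    rw [memB_iff, runB_correct] at hmem
    refine ⟨qf, hqf, ?_⟩
    have : {s : ℕ | s ∈ [M.2.1]} = {M.2.1} := by
      ext s; simp
    rwa [this] at hmem
  · rintro ⟨qf, hqf, hr⟩
    refine ⟨qf, hqf, ?_⟩
    rw [memB_iff, runB_correct]
    have : {s : ℕ | s ∈ [M.2.1]} = {M.2.1} := by
      ext s; simp
    rw [this]
    exact hr

def dedupB (l : List ℕ) : List ℕ :=
  l.foldr (fun a acc => if memB a acc then acc else a :: acc) []

lemma mem_dedupB : ∀ {l : List ℕ} {a : ℕ}, a ∈ dedupB l ↔ a ∈ l := by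
  intro l
  induction l with
  | nil => intro a; simp [dedupB]
  | cons b l ih =>
    intro a
    unfold dedupB at ih ⊢
    rw [List.foldr_cons]
    by_cases hc : memB b (List.foldr (fun a acc => if memB a acc then acc else a :: acc) [] l) = true
    · rw [if_pos hc]
      rw [ih]
      constructor
      · intro h; exact List.mem_cons_of_mem _ h
      · intro h
        rcases List.mem_cons.1 h with rfl | h
        · rw [← ih]; exact memB_iff.1 hc
        · exact h
    · rw [if_neg hc]
      constructor
      · intro h
        rcases List.mem_cons.1 h with rfl | h
        · exact List.mem_cons_self
        · exact List.mem_cons_of_mem _ (ih.1 h)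
      · intro h
        rcases List.mem_cons.1 h with rfl | h
        · exact List.mem_cons_self
        · exact List.mem_cons_of_mem _ (ih.2 h)

lemma nodup_dedupB : ∀ (l : List ℕ), (dedupB l).Nodup := by
  intro l
  induction l with
  | nil => simp [dedupB]
  | cons b l ih =>
    unfold dedupB at ih ⊢
    rw [List.foldr_cons]
    by_cases hc : memB b (List.foldr (fun a acc => if memB a acc then acc else a :: acc) [] l) = true
    · rw [if_pos hc]; exact ih
    · rw [if_neg hc]
      refine List.Nodup.cons ?_ ih
      intro hmem
      exact hc (memB_iff.2 hmem)

lemma dedupB_toFinset (l : List ℕ) : (dedupB l).toFinset = l.toFinset := by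
  apply Finset.ext
  intro a
  rw [List.mem_toFinset, List.mem_toFinset, mem_dedupB]

lemma dedupB_length (l : List ℕ) : (dedupB l).length = l.toFinset.card := by
  rw [← dedupB_toFinset, List.toFinset_card_of_nodup (nodup_dedupB l)]

def subsB (l : List ℕ) : List (List ℕ) :=
  l.foldr (fun a acc => acc ++ acc.map (a :: ·)) [[]]

lemma subsB_complete : ∀ (l : List ℕ) (S : Finset ℕ), S ⊆ l.toFinset →
    ∃ R ∈ subsB l, R.toFinset = S := by
  intro l
  induction l with
  | nil =>
    intro S hS
    refine ⟨[], by simp [subsB], ?_⟩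
    simp only [List.toFinset_nil]
    symm
    rw [← Finset.subset_empty]
    intro x hx
    have := hS hx
    simpa using this
  | cons a l ih =>
    intro S hS
    by_cases ha : a ∈ S
    · have hsub : S.erase a ⊆ l.toFinset := by
        intro x hx
        have hxa := Finset.ne_of_mem_erase hx
        have hxS := Finset.mem_of_mem_erase hx
        have := hS hxS
        rw [List.mem_toFinset, List.mem_cons] at this
        rcases this with rfl | h
        · exact absurd rfl hxa
        · rwa [List.mem_toFinset]
      rcases ih (S.erase a) hsub with ⟨R, hR, hRfin⟩
      refine ⟨a :: R, ?_, ?_⟩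
      · unfold subsB
        rw [List.foldr_cons]
        apply List.mem_append.2
        right
        rw [List.mem_map]
        exact ⟨R, hR, rfl⟩
      · rw [List.toFinset_cons, hRfin, Finset.insert_erase ha]
    · have hsub : S ⊆ l.toFinset := by
        intro x hx
        have := hS hx
        rw [List.mem_toFinset, List.mem_cons] at this
        rcases this with rfl | h
        · exact absurd hx ha
        · rwa [List.mem_toFinset]
      rcases ih S hsub with ⟨R, hR, hRfin⟩
      refine ⟨R, ?_, hRfin⟩
      unfold subsB
      rw [List.foldr_cons]
      exact List.mem_append.2 (Or.inl hR)

def coverB (k : ℕ) (es : List (ℕ × ℕ)) : Bool :=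
  anyB (subsB (es.map Prod.fst)) (fun R =>
    decide ((dedupB R).length ≤ k) &&
    allB es (fun pr => anyB es (fun pr' => decide (pr'.2 = pr.2) && memB pr'.1 R)))

lemma coverB_iff {k : ℕ} {es : List (ℕ × ℕ)} : coverB k es = true ↔ Cover k es := by
  rw [coverB, anyB_iff]
  constructor
  · rintro ⟨R, _, hcond⟩
    rw [Bool.and_eq_true, decide_eq_true_eq, allB_iff] at hcond
    refine ⟨R.toFinset, by rw [← dedupB_length]; exact hcond.1, ?_⟩
    intro pr hpr
    have := hcond.2 pr hpr
    rw [anyB_iff] at this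
    rcases this with ⟨pr', hpr', hb⟩
    rw [Bool.and_eq_true, decide_eq_true_eq, memB_iff] at hb
    exact ⟨pr', hpr', hb.1, List.mem_toFinset.2 hb.2⟩
  · rintro ⟨R, hcard, hcov⟩
    have hsub : R ∩ (es.map Prod.fst).toFinset ⊆ (es.map Prod.fst).toFinset :=
      Finset.inter_subset_right
    rcases subsB_complete (es.map Prod.fst) _ hsub with ⟨Rl, hRl, hRfin⟩
    refine ⟨Rl, hRl, ?_⟩
    rw [Bool.and_eq_true, decide_eq_true_eq, allB_iff]
    constructor
    · rw [dedupB_length, hRfin]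
      calc (R ∩ (es.map Prod.fst).toFinset).card ≤ R.card :=
          Finset.card_le_card Finset.inter_subset_left
        _ ≤ k := hcard
    · intro pr hpr
      rcases hcov pr hpr with ⟨pr', hpr', hsnd, hR⟩
      rw [anyB_iff]
      refine ⟨pr', hpr', ?_⟩
      rw [Bool.and_eq_true, decide_eq_true_eq, memB_iff]
      refine ⟨hsnd, ?_⟩
      rw [← List.mem_toFinset, hRfin]
      refine Finset.mem_inter.2 ⟨hR, ?_⟩
      rw [List.mem_toFinset, List.mem_map]
      exact ⟨pr', hpr', rfl⟩

def pairsB (B : ℕ) : List (ℕ × ℕ) :=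
  ((List.range (B+1)).map (fun a => (List.range (B+1)).map (fun b => (a, b)))).flatten

lemma mem_pairsB {B : ℕ} {pr : ℕ × ℕ} : pr ∈ pairsB B ↔ pr.1 ≤ B ∧ pr.2 ≤ B := by
  unfold pairsB
  rw [List.mem_flatten]
  constructor
  · rintro ⟨l, hl, hpr⟩
    rw [List.mem_map] at hl
    rcases hl with ⟨a, ha, rfl⟩
    rw [List.mem_map] at hpr
    rcases hpr with ⟨b, hb, rfl⟩
    rw [List.mem_range] at ha hb
    exact ⟨by omega, by omega⟩
  · rintro ⟨h1, h2⟩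
    refine ⟨(List.range (B+1)).map (fun b => (pr.1, b)), ?_, ?_⟩
    · rw [List.mem_map]
      exact ⟨pr.1, List.mem_range.2 (by omega), rfl⟩
    · rw [List.mem_map]
      exact ⟨pr.2, List.mem_range.2 (by omega), by simp⟩

def listsB (base : List (ℕ × ℕ)) : ℕ → List (List (ℕ × ℕ))
  | 0 => [[]]
  | (n+1) => [[]] ++ (base.map (fun a => (listsB base n).map (a :: ·))).flatten

lemma mem_listsB (base : List (ℕ × ℕ)) :
    ∀ (n : ℕ) (l : List (ℕ × ℕ)),
      l ∈ listsB base n ↔ l.length ≤ n ∧ ∀ pr ∈ l, pr ∈ base := by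
  intro n
  induction n with
  | zero =>
    intro l
    simp only [listsB, List.mem_singleton]
    constructor
    · rintro rfl; simp
    · rintro ⟨h1, _⟩
      exact List.length_eq_zero_iff.1 (by omega)
  | succ n ih =>
    intro l
    simp only [listsB, List.mem_append, List.mem_singleton, List.mem_flatten]
    constructor
    · rintro (rfl | ⟨ll, hll, hl⟩)
      · simp
      · rw [List.mem_map] at hll
        rcases hll with ⟨a, ha, rfl⟩
        rw [List.mem_map] at hl
        rcases hl with ⟨l', hl', rfl⟩
        rcases (ih l').1 hl' with ⟨h1, h2⟩
        refine ⟨by simp; omega, ?_⟩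
        intro pr hpr
        rcases List.mem_cons.1 hpr with rfl | hpr
        · exact ha
        · exact h2 pr hpr
    · rintro ⟨h1, h2⟩
      cases l with
      | nil => exact Or.inl rfl
      | cons a l =>
        right
        refine ⟨(listsB base n).map (a :: ·), ?_, ?_⟩
        · rw [List.mem_map]
          exact ⟨a, h2 a (List.mem_cons_self), rfl⟩
        · rw [List.mem_map]
          refine ⟨l, ?_, rfl⟩
          apply (ih l).2
          refine ⟨by simpa using h1, ?_⟩
          intro pr hpr
          exact h2 pr (List.mem_cons_of_mem _ hpr)

def searchB (M : NFAEnc) : Bool :=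
  anyB (List.range (3 * Nb M.1 + 1)) (fun k =>
    anyB (listsB (pairsB (2 * Nb M.1)) (Mb M.1)) (fun es =>
      acceptB M (encode k es) && (coverB k es || decide (2 * Nb M.1 ≤ k))))

lemma searchB_iff {M : NFAEnc} : searchB M = true ↔ BddWitness M := by
  rw [searchB, anyB_iff]
  constructor
  · rintro ⟨k, hk, hb⟩
    rw [anyB_iff] at hb
    rcases hb with ⟨es, hes, hb⟩
    rw [Bool.and_eq_true, Bool.or_eq_true, decide_eq_true_eq] at hb
    rw [List.mem_range] at hk
    rcases (mem_listsB _ _ _).1 hes with ⟨hlen, hvals⟩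
    refine ⟨k, es, by omega, hlen, ?_, acceptB_iff.1 hb.1, ?_⟩
    · intro pr hpr
      exact mem_pairsB.1 (hvals pr hpr)
    · rcases hb.2 with h | h
      · exact Or.inl (coverB_iff.1 h)
      · exact Or.inr h
  · rintro ⟨k, es, hk, hlen, hvals, hacc, hgood⟩
    refine ⟨k, List.mem_range.2 (by omega), ?_⟩
    rw [anyB_iff]
    refine ⟨es, (mem_listsB _ _ _).2 ⟨hlen, ?_⟩, ?_⟩
    · intro pr hpr
      exact mem_pairsB.2 (hvals pr hpr)
    · rw [Bool.and_eq_true, Bool.or_eq_true, decide_eq_true_eq]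
      refine ⟨acceptB_iff.2 hacc, ?_⟩
      rcases hgood with h | h
      · exact Or.inl (coverB_iff.2 h)
      · exact Or.inr h

end HS
namespace HS

open Primrec

lemma primrec_anyB {α β : Type} [Primcodable α] [Primcodable β]
    {f : α → List β} {g : α → β → Bool} (hf : Primrec f) (hg : Primrec₂ g) :
    Primrec fun a => anyB (f a) (g a) := by
  have h : Primrec₂ (fun a (p : Bool × β) => p.1 || g a p.2) :=
    Primrec₂.comp (Primrec.dom_bool₂ (· || ·)) (Primrec.fst.comp Primrec.snd)
      (hg.comp Primrec.fst (Primrec.snd.comp Primrec.snd))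
  exact (Primrec.list_foldl hf (Primrec.const false) h).of_eq (fun a => rfl)

lemma primrec_allB {α β : Type} [Primcodable α] [Primcodable β]
    {f : α → List β} {g : α → β → Bool} (hf : Primrec f) (hg : Primrec₂ g) :
    Primrec fun a => allB (f a) (g a) := by
  have h : Primrec₂ (fun a (p : Bool × β) => p.1 && g a p.2) :=
    Primrec₂.comp (Primrec.dom_bool₂ (· && ·)) (Primrec.fst.comp Primrec.snd)
      (hg.comp Primrec.fst (Primrec.snd.comp Primrec.snd))
  exact (Primrec.list_foldl hf (Primrec.const true) h).of_eq (fun a => rfl)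

lemma primrec_memB {α : Type} [Primcodable α]
    {f : α → ℕ} {g : α → List ℕ} (hf : Primrec f) (hg : Primrec g) :
    Primrec fun a => memB (f a) (g a) := by
  unfold memB
  exact primrec_anyB hg (Primrec.eq.decide.comp Primrec.snd (hf.comp Primrec.fst))

lemma primrec_pow : Primrec₂ (fun (a b : ℕ) => a ^ b) := by
  have := Primrec.nat_rec (f := fun _ : ℕ => 1)
    (g := fun (a : ℕ) (p : ℕ × ℕ) => p.2 * a)
    (Primrec.const 1)
    (Primrec₂.comp Primrec.nat_mul (Primrec.snd.comp Primrec.snd) Primrec.fst)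
  refine this.of_eq ?_
  intro a b
  induction b with
  | zero => rfl
  | succ b ih => simp only at ih ⊢; simp [pow_succ, ih]

lemma primrec_nbF : Primrec (fun M : NFAEnc => nb M.1) := by
  unfold nb
  exact Primrec₂.comp Primrec.nat_add
    (Primrec₂.comp Primrec.nat_mul (Primrec.const 2)
      (Primrec.list_length.comp Primrec.fst)) (Primrec.const 1)

lemma primrec_NbF : Primrec (fun M : NFAEnc => Nb M.1) := by
  unfold Nb
  exact Primrec₂.comp Primrec.nat_add
    (Primrec₂.comp primrec_pow (Primrec.const 2)
      (Primrec₂.comp Primrec.nat_mul primrec_nbF primrec_nbF)) (Primrec.const 1)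

lemma primrec_MbF : Primrec (fun M : NFAEnc => Mb M.1) := by
  unfold Mb
  have h2Nb1 : Primrec (fun M : NFAEnc => 2 * Nb M.1 + 1) :=
    Primrec₂.comp Primrec.nat_add
      (Primrec₂.comp Primrec.nat_mul (Primrec.const 2) primrec_NbF) (Primrec.const 1)
  exact Primrec₂.comp Primrec.nat_add
    (Primrec₂.comp Primrec.nat_mul
      (Primrec₂.comp Primrec.nat_add
        (Primrec₂.comp Primrec.nat_mul h2Nb1 h2Nb1) (Primrec.const 1))
      primrec_nbF)
    primrec_nbF

lemma primrec_replicate {α : Type} [Primcodable α]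
    {f : α → ℕ} {x : Letter} (hf : Primrec f) :
    Primrec fun a => List.replicate (f a) x := by
  have := Primrec.list_map (Primrec.list_range.comp hf)
    (Primrec₂.const x (α := α) (β := ℕ))
  refine this.of_eq ?_
  intro a
  apply List.eq_replicate_iff.2
  constructor
  · simp
  · intro b hb
    rcases List.mem_map.1 hb with ⟨_, _, rfl⟩
    rfl

lemma primrec_thresholdTok {α : Type} [Primcodable α]
    {f : α → ℕ} (hf : Primrec f) : Primrec fun a => thresholdTok (f a) := by
  unfold thresholdTok
  exact Primrec.list_cons.comp (Primrec.const Letter.tri)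
    (Primrec₂.comp Primrec.list_append (primrec_replicate hf)
      (Primrec.const [Letter.dollar]))

lemma primrec_leftTok {α : Type} [Primcodable α]
    {f : α → ℕ} (hf : Primrec f) : Primrec fun a => leftTok (f a) := by
  unfold leftTok
  exact Primrec.list_cons.comp (Primrec.const Letter.tri)
    (Primrec₂.comp Primrec.list_append (primrec_replicate hf)
      (Primrec.const [Letter.hash]))

lemma primrec_rightTok {α : Type} [Primcodable α]
    {f : α → ℕ} (hf : Primrec f) : Primrec fun a => rightTok (f a) := by
  unfold rightTok
  exact Primrec.list_cons.comp (Primrec.const Letter.tri)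
    (Primrec₂.comp Primrec.list_append (primrec_replicate hf)
      (Primrec.const [Letter.dollar]))

lemma primrec_encodeF {α : Type} [Primcodable α]
    {f : α → ℕ} {g : α → List (ℕ × ℕ)} (hf : Primrec f) (hg : Primrec g) :
    Primrec fun a => encode (f a) (g a) := by
  unfold encode
  refine Primrec₂.comp Primrec.list_append (primrec_thresholdTok hf) ?_
  refine Primrec.list_flatten.comp ?_
  refine Primrec.list_map hg ?_
  exact Primrec₂.comp Primrec.list_append
    (primrec_leftTok (Primrec.fst.comp Primrec.snd))
    (primrec_rightTok (Primrec.snd.comp Primrec.snd))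

lemma primrec_stepB {α : Type} [Primcodable α]
    {fT : α → Trans} {fS : α → List ℕ} {fx : α → Letter}
    (hT : Primrec fT) (hS : Primrec fS) (hx : Primrec fx) :
    Primrec fun a => stepB (fT a) (fS a) (fx a) := by
  unfold stepB
  have hcond : Primrec₂ (fun a (p : (ℕ × Letter × ℕ) × List ℕ) =>
      cond (memB p.1.1 (fS a) && decide (p.1.2.1 = fx a)) (p.1.2.2 :: p.2) p.2) := by
    refine Primrec.cond ?_ ?_ ?_
    · refine Primrec₂.comp (Primrec.dom_bool₂ (· && ·)) ?_ ?_
      · exact primrec_memB (Primrec.fst.comp (Primrec.fst.comp Primrec.snd))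
          (hS.comp Primrec.fst)
      · exact Primrec.eq.decide.comp
          (Primrec.fst.comp (Primrec.snd.comp (Primrec.fst.comp Primrec.snd)))
          (hx.comp Primrec.fst)
    · exact Primrec.list_cons.comp
        (Primrec.snd.comp (Primrec.snd.comp (Primrec.fst.comp Primrec.snd)))
        (Primrec.snd.comp Primrec.snd)
    · exact Primrec.snd.comp Primrec.snd
  have := Primrec.list_foldr hT (Primrec.const ([] : List ℕ)) hcond
  refine this.of_eq ?_
  intro a
  congr 1
  funext tr acc
  by_cases hc : (memB tr.1 (fS a) && decide (tr.2.1 = fx a)) = true <;> simp [hc]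

lemma primrec_acceptB {α : Type} [Primcodable α]
    {fM : α → NFAEnc} {fw : α → Word} (hM : Primrec fM) (hw : Primrec fw) :
    Primrec fun a => acceptB (fM a) (fw a) := by
  unfold acceptB
  have hstepP : Primrec₂ (fun (a : α) (p : List ℕ × Letter) =>
      stepB (fM a).1 p.1 p.2) :=
    primrec_stepB (α := α × (List ℕ × Letter))
      (Primrec.fst.comp (hM.comp Primrec.fst))
      (Primrec.fst.comp Primrec.snd)
      (Primrec.snd.comp Primrec.snd)
  have hfold : Primrec fun a => (fw a).foldl (stepB (fM a).1) [(fM a).2.1] := by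
    have := Primrec.list_foldl hw
      (Primrec.list_cons.comp (Primrec.fst.comp (Primrec.snd.comp hM))
        (Primrec.const [])) hstepP
    exact this.of_eq (fun a => rfl)
  have hmem2 : Primrec₂ (fun (a : α) (qf : ℕ) =>
      memB qf ((fw a).foldl (stepB (fM a).1) [(fM a).2.1])) :=
    primrec_memB Primrec.snd (hfold.comp Primrec.fst)
  exact primrec_anyB (Primrec.snd.comp (Primrec.snd.comp hM)) hmem2

lemma primrec_dedupB {α : Type} [Primcodable α]
    {f : α → List ℕ} (hf : Primrec f) : Primrec fun a => dedupB (f a) := by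
  unfold dedupB
  have hcond : Primrec₂ (fun (_ : α) (p : ℕ × List ℕ) =>
      cond (memB p.1 p.2) p.2 (p.1 :: p.2)) := by
    refine Primrec.cond ?_ ?_ ?_
    · exact primrec_memB (Primrec.fst.comp Primrec.snd) (Primrec.snd.comp Primrec.snd)
    · exact Primrec.snd.comp Primrec.snd
    · exact Primrec.list_cons.comp (Primrec.fst.comp Primrec.snd)
        (Primrec.snd.comp Primrec.snd)
  have := Primrec.list_foldr hf (Primrec.const ([] : List ℕ)) hcond
  refine this.of_eq ?_
  intro a
  congr 1
  funext x acc
  by_cases hc : memB x acc = true <;> simp [hc]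

lemma primrec_subsB {α : Type} [Primcodable α]
    {f : α → List ℕ} (hf : Primrec f) : Primrec fun a => subsB (f a) := by
  unfold subsB
  have hcond : Primrec₂ (fun (_ : α) (p : ℕ × List (List ℕ)) =>
      p.2 ++ p.2.map (p.1 :: ·)) := by
    refine Primrec₂.comp Primrec.list_append (Primrec.snd.comp Primrec.snd) ?_
    refine Primrec.list_map (Primrec.snd.comp Primrec.snd) ?_
    exact (Primrec.list_cons.comp
      (Primrec.fst.comp (Primrec.snd.comp Primrec.fst)) Primrec.snd)
  exact (Primrec.list_foldr hf (Primrec.const ([[]] : List (List ℕ))) hcond).of_eq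
    (fun a => rfl)

lemma primrec_coverB {α : Type} [Primcodable α]
    {fk : α → ℕ} {fes : α → List (ℕ × ℕ)} (hk : Primrec fk) (hes : Primrec fes) :
    Primrec fun a => coverB (fk a) (fes a) := by
  have hfsts : Primrec fun a => (fes a).map Prod.fst := by
    have hg : Primrec₂ (fun (_ : α) (pr : ℕ × ℕ) => pr.1) :=
      Primrec.fst.comp Primrec.snd
    exact Primrec.list_map hes hg
  have hinner2 : Primrec₂ (fun (p : (α × List ℕ) × ℕ × ℕ) (pr' : ℕ × ℕ) =>
      decide (pr'.2 = p.2.2) && memB pr'.1 p.1.2) := by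
    refine Primrec₂.comp (Primrec.dom_bool₂ (· && ·)) ?_ ?_
    · exact Primrec.eq.decide.comp (Primrec.snd.comp Primrec.snd)
        (Primrec.snd.comp (Primrec.snd.comp Primrec.fst))
    · exact primrec_memB (Primrec.fst.comp Primrec.snd)
        (Primrec.snd.comp (Primrec.fst.comp Primrec.fst))
  have hallB : Primrec₂ (fun (q : α × List ℕ) (pr : ℕ × ℕ) =>
      anyB (fes q.1) (fun pr' => decide (pr'.2 = pr.2) && memB pr'.1 q.2)) :=
    primrec_anyB (hes.comp (Primrec.fst.comp Primrec.fst)) hinner2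
  have hRcond : Primrec₂ (fun (a : α) (R : List ℕ) =>
      decide ((dedupB R).length ≤ fk a) &&
      allB (fes a) (fun pr =>
        anyB (fes a) (fun pr' => decide (pr'.2 = pr.2) && memB pr'.1 R))) := by
    refine Primrec₂.comp (Primrec.dom_bool₂ (· && ·)) ?_ ?_
    · exact Primrec.nat_le.decide.comp
        (Primrec.list_length.comp (primrec_dedupB Primrec.snd))
        (hk.comp Primrec.fst)
    · exact primrec_allB (hes.comp Primrec.fst) hallB
  unfold coverB
  exact primrec_anyB (primrec_subsB hfsts) hRcond

lemma primrec_pairsB {α : Type} [Primcodable α]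
    {f : α → ℕ} (hf : Primrec f) : Primrec fun a => pairsB (f a) := by
  unfold pairsB
  have hg2 : Primrec₂ (fun (p : α × ℕ) (b : ℕ) => (p.2, b)) :=
    Primrec.pair (Primrec.snd.comp Primrec.fst) Primrec.snd
  have hg : Primrec₂ (fun (a : α) (x : ℕ) =>
      (List.range (f a + 1)).map (fun b => (x, b))) :=
    Primrec.list_map
      (Primrec.list_range.comp
        (Primrec₂.comp Primrec.nat_add (hf.comp Primrec.fst) (Primrec.const 1)))
      hg2
  exact Primrec.list_flatten.comp
    (Primrec.list_map
      (Primrec.list_range.comp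
        (Primrec₂.comp Primrec.nat_add hf (Primrec.const 1))) hg)

lemma listsB_eq_rec (base : List (ℕ × ℕ)) : ∀ n : ℕ,
    listsB base n = Nat.rec [[]]
      (fun _ ih => [[]] ++ (base.map (fun x => ih.map (x :: ·))).flatten) n := by
  intro n
  induction n with
  | zero => rfl
  | succ n ih => simp only [listsB, ih]

lemma primrec_listsB {α : Type} [Primcodable α]
    {fb : α → List (ℕ × ℕ)} {fn : α → ℕ} (hb : Primrec fb) (hn : Primrec fn) :
    Primrec fun a => listsB (fb a) (fn a) := by
  have hg2 : Primrec₂ (fun (p : α × (ℕ × List (List (ℕ × ℕ)))) (x : ℕ × ℕ) =>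
      p.2.2.map (x :: ·)) := by
    have hc : Primrec₂ (fun (q : (α × (ℕ × List (List (ℕ × ℕ)))) × (ℕ × ℕ))
        (l : List (ℕ × ℕ)) => q.2 :: l) :=
      Primrec.list_cons.comp (Primrec.snd.comp Primrec.fst) Primrec.snd
    exact Primrec.list_map (Primrec.snd.comp (Primrec.snd.comp Primrec.fst)) hc
  have hstep : Primrec₂ (fun (a : α) (p : ℕ × List (List (ℕ × ℕ))) =>
      ([[]] : List (List (ℕ × ℕ))) ++
        ((fb a).map (fun x => p.2.map (x :: ·))).flatten) := by
    refine Primrec₂.comp Primrec.list_append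
      (Primrec.const ([[]] : List (List (ℕ × ℕ)))) ?_
    exact Primrec.list_flatten.comp
      (Primrec.list_map (hb.comp Primrec.fst) hg2)
  have hrec := (Primrec.nat_rec
    (f := fun _ : α => ([[]] : List (List (ℕ × ℕ))))
    (Primrec.const _) hstep).comp Primrec.id hn
  refine hrec.of_eq ?_
  intro a
  rw [listsB_eq_rec]
  rfl

lemma primrec_searchB : Primrec searchB := by
  have h2Nb : Primrec (fun M : NFAEnc => 2 * Nb M.1) :=
    Primrec₂.comp Primrec.nat_mul (Primrec.const 2) primrec_NbF
  have hg2 : Primrec₂ (fun (q : NFAEnc × ℕ) (es : List (ℕ × ℕ)) =>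
      acceptB q.1 (encode q.2 es) && (coverB q.2 es || decide (2 * Nb q.1.1 ≤ q.2))) := by
    refine Primrec₂.comp (Primrec.dom_bool₂ (· && ·)) ?_ ?_
    · exact primrec_acceptB (Primrec.fst.comp Primrec.fst)
        (primrec_encodeF (Primrec.snd.comp Primrec.fst) Primrec.snd)
    · refine Primrec₂.comp (Primrec.dom_bool₂ (· || ·)) ?_ ?_
      · exact primrec_coverB (Primrec.snd.comp Primrec.fst) Primrec.snd
      · exact Primrec.nat_le.decide.comp
          (h2Nb.comp (Primrec.fst.comp Primrec.fst))
          (Primrec.snd.comp Primrec.fst)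
  have hinner : Primrec₂ (fun (M : NFAEnc) (k : ℕ) =>
      anyB (listsB (pairsB (2 * Nb M.1)) (Mb M.1)) (fun es =>
        acceptB M (encode k es) && (coverB k es || decide (2 * Nb M.1 ≤ k)))) :=
    primrec_anyB
      (primrec_listsB (primrec_pairsB (h2Nb.comp Primrec.fst))
        (primrec_MbF.comp Primrec.fst)) hg2
  unfold searchB
  exact primrec_anyB
    (Primrec.list_range.comp
      (Primrec₂.comp Primrec.nat_add
        (Primrec₂.comp Primrec.nat_mul (Primrec.const 3) primrec_NbF)
        (Primrec.const 1))) hinner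

end HS
/-- `int_Reg(Hitting Set)` is decidable: the predicate on (finite
encodings of) NFAs `M` over `Σ`, asserting that some `w ∈ L(M) ∩ Enc` with
`decode_hyp(w) = (H, k)` satisfies that `H` has a hitting set of size at most `k`,
is computable. -/
theorem stmt19 :
    ComputablePred (fun M : NFAEnc =>
      ∃ w : Word, w ∈ encLang M ∧ w ∈ Enc ∧
        ∃ (H : FinHypergraph) (k : ℕ), decodesToHyp w H k ∧ HasHittingSet H k) := by
  apply ComputablePred.computable_iff.2
  refine ⟨HS.searchB, HS.primrec_searchB.to_comp, ?_⟩
  funext M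
  exact propext ((HS.P_iff_bdd M).trans HS.searchB_iff.symm)
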